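/- Let N₁, N₂, W₁, W₂ be positive integers, let τ ∈ ℂ with Im τ ≠ 0, and set r = N₁W₂/(N₂W₁). Suppose α, β, γ, δ are real numbers with γ ≠ 0, r·τ·(γτ + δ) = ατ + β, and αδ − βγ = 1. Then (N₂W₁)²α² − 2N₁N₂W₁W₂(Re τ)αγ + (N₁W₂)²|τ|²γ² = N₁N₂W₁W₂. -/

import Mathlib

/-- With `r = N₁W₂/(N₂W₁)`, if `γ ≠ 0`, `r·τ·(γτ + δ) = ατ + β` and `αδ - βγ = 1`
(real `α, β, γ, δ`), then `(N₂W₁)²α² - 2N₁N₂W₁W₂(Re τ)αγ + (N₁W₂)²|τ|²γ² = N₁N₂W₁W₂`. -/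
theorem quadratic_from_unit_det (N₁ N₂ W₁ W₂ : ℕ) (hN₁ : 0 < N₁) (hN₂ : 0 < N₂)
    (hW₁ : 0 < W₁) (hW₂ : 0 < W₂) (τ : ℂ) (hτ : τ.im ≠ 0)
    (α β γ δ : ℝ) (hγ : γ ≠ 0)
    (h : (((N₁ * W₂ : ℝ) / (N₂ * W₁) : ℝ) : ℂ) * τ * ((γ : ℂ) * τ + (δ : ℂ))
        = (α : ℂ) * τ + (β : ℂ))
    (hdet : α * δ - β * γ = 1) :
    ((N₂ * W₁ : ℝ))^2 * α^2 - 2 * (N₁ * N₂ * W₁ * W₂ : ℝ) * τ.re * (α * γ)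
        + ((N₁ * W₂ : ℝ))^2 * ‖τ‖^2 * γ^2 = (N₁ * N₂ * W₁ * W₂ : ℝ) := by
  have hA : (0:ℝ) < (N₁ * W₂ : ℝ) := by positivity
  have hB : (0:ℝ) < (N₂ * W₁ : ℝ) := by positivity
  set A : ℝ := (N₁ * W₂ : ℝ) with hAdef
  set B : ℝ := (N₂ * W₁ : ℝ) with hBdef
  set x : ℝ := τ.re
  set y : ℝ := τ.im
  rw [Complex.ext_iff] at h
  obtain ⟨h1, h2⟩ := h
  simp only [Complex.add_re, Complex.add_im, Complex.mul_re, Complex.mul_im,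
    Complex.ofReal_re, Complex.ofReal_im] at h1 h2
  have habs : ‖τ‖^2 = x^2 + y^2 := by
    rw [Complex.sq_norm, Complex.normSq_apply]; ring
  rw [habs]
  have hAB : (N₁ * N₂ * W₁ * W₂ : ℝ) = A * B := by push_cast; ring
  rw [hAB]
  have hBne : B ≠ 0 := ne_of_gt hB
  have h2' : A * γ * (2 * x) + A * δ - B * α = 0 := by
    have hy : y * (A * γ * (2 * x) + A * δ - B * α) = 0 := by
      field_simp at h2
      linear_combination h2
    exact (mul_eq_zero.mp hy).resolve_left hτ
  have h1' : A * γ * (x^2 - y^2) + A * δ * x - B * α * x - B * β = 0 := by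
    field_simp at h1
    linear_combination h1
  linear_combination A * B * hdet + (A * γ * x - B * α) * h2' - A * γ * h1'
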